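/- Let S be an open convex set in a real Banach space E and let f : S → ℝ be Fréchet differentiable, semistrictly quasiconvex, and semistrictly quasiconcave on S. Then f is pseudolinear on S if and only if the implication holds: x, y ∈ S and ⟨∇f(x), y − x⟩ = 0 imply f(y) = f(x). -/

import Mathlib

def Pseudoconvex {E : Type*} [NormedAddCommGroup E] [NormedSpace ℝ E]
    (S : Set E) (f : E → ℝ) (f' : E → E →L[ℝ] ℝ) : Prop :=
  ∀ x ∈ S, ∀ y ∈ S, f y < f x → f' x (y - x) < 0

def Pseudolinear {E : Type*} [NormedAddCommGroup E] [NormedSpace ℝ E]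
    (S : Set E) (f : E → ℝ) (f' : E → E →L[ℝ] ℝ) : Prop :=
  Pseudoconvex S f f' ∧ Pseudoconvex S (fun x => -f x) (fun x => -(f' x))

def SemistrictlyQuasiconvex {E : Type*} [NormedAddCommGroup E] [NormedSpace ℝ E]
    (S : Set E) (f : E → ℝ) : Prop :=
  ∀ x ∈ S, ∀ y ∈ S, ∀ l ∈ Set.Ioo (0:ℝ) 1,
    f y < f x → f (x + l • (y - x)) < f x

lemma aux_exists_gt {E : Type*} [NormedAddCommGroup E] [NormedSpace ℝ E]
    {f : E → ℝ} {φ : E →L[ℝ] ℝ} {x y : E}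
    (hd : HasFDerivAt f φ x) (hc : 0 < φ (y - x)) :
    ∃ l ∈ Set.Ioo (0:ℝ) 1, f x < f (x + l • (y - x)) := by
  set g : ℝ → ℝ := fun l => f (x + l • (y - x)) with hg
  have hcurve : HasDerivAt (fun l : ℝ => x + l • (y - x)) (y - x) 0 := by
    simpa using ((hasDerivAt_id (0:ℝ)).smul_const (y - x)).const_add x
  have hgd : HasDerivAt g (φ (y - x)) 0 := by
    have hd' : HasFDerivAt f φ (x + (0:ℝ) • (y - x)) := by simpa using hd
    exact hd'.comp_hasDerivAt (x := (0:ℝ)) hcurve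
  have hslope := hasDerivAt_iff_tendsto_slope.mp hgd
  have hev : ∀ᶠ l in nhdsWithin 0 (Set.Ioi (0:ℝ)),
      0 < slope g 0 l := by
    have h1 : ∀ᶠ l in nhdsWithin 0 {(0:ℝ)}ᶜ, 0 < slope g 0 l :=
      hslope.eventually (eventually_gt_nhds hc)
    exact h1.filter_mono (nhdsWithin_mono _ (by intro l hl; exact ne_of_gt hl))
  have hlt1 : ∀ᶠ l in nhdsWithin 0 (Set.Ioi (0:ℝ)), l < 1 := by
    filter_upwards [eventually_nhdsWithin_of_eventually_nhds
      (eventually_lt_nhds (by norm_num : (0:ℝ) < 1))] with l hl using hl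
  have hpos : ∀ᶠ l in nhdsWithin 0 (Set.Ioi (0:ℝ)), 0 < l :=
    eventually_mem_nhdsWithin.mono (fun l hl => hl)
  obtain ⟨l, hs, h1, hp⟩  := (hev.and (hlt1.and hpos)).exists
  refine ⟨l, ⟨hp, h1⟩, ?_⟩
  have : 0 < g l - g 0 := by
    have := mul_pos hs hp
    rw [slope_def_field, sub_zero, div_mul_cancel₀ _ hp.ne'] at this
    exact this
  have hg0 : g 0 = f x := by simp [hg]
  have := sub_pos.mp this
  rwa [hg0] at this

theorem stmt_11 {E : Type*} [NormedAddCommGroup E] [NormedSpace ℝ E] [CompleteSpace E]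
    {S : Set E} (hSo : IsOpen S) (hSc : Convex ℝ S)
    (f : E → ℝ) (f' : E → E →L[ℝ] ℝ)
    (hdiff : ∀ x ∈ S, HasFDerivAt f (f' x) x)
    (hqc : SemistrictlyQuasiconvex S f)
    (hqcc : SemistrictlyQuasiconvex S (fun x => -f x)) :
    Pseudolinear S f f' ↔
      (∀ x ∈ S, ∀ y ∈ S, f' x (y - x) = 0 → f y = f x) := by
  constructor
  · rintro ⟨hpc, hpcc⟩ x hx y hy h0
    by_contra hne
    rcases lt_or_gt_of_ne hne with h | h
    · exact absurd h0 (ne_of_lt (hpc x hx y hy h))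
    · have := hpcc x hx y hy (by simpa using h)
      simp only [ContinuousLinearMap.neg_apply, neg_neg] at this
      exact absurd h0 (ne_of_gt (by linarith))
  · intro H
    constructor
    · intro x hx y hy hlt
      rcases lt_trichotomy (f' x (y - x)) 0 with h | h | h
      · exact h
      · exact absurd (H x hx y hy h) (ne_of_lt hlt)
      · exfalso
        obtain ⟨l, hl, hgt⟩ := aux_exists_gt (hdiff x hx) h
        have hmem : x + l • (y - x) ∈ S :=
          hSc.add_smul_sub_mem hx hy ⟨hl.1.le, hl.2.le⟩
        exact absurd (hqc x hx y hy l hl hlt) (not_lt.mpr hgt.le)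
    · intro x hx y hy hlt
      simp only [ContinuousLinearMap.neg_apply]
      simp only at hlt
      have hlt' : f x < f y := by linarith
      rcases lt_trichotomy (f' x (y - x)) 0 with h | h | h
      · exfalso
        obtain ⟨l, hl, hgt⟩ := aux_exists_gt (E := E)
          (f := fun z => -f z) (φ := -(f' x)) (x := x) (y := y)
          (hdiff x hx).neg (by simpa using h)
        have := hqcc x hx y hy l hl (by simpa using hlt')
        simp only at this hgt
        linarith
      · exact absurd (H x hx y hy h) (ne_of_gt hlt')
      · linarith
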